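/- Let H be a real inner product space, p ≥ 1, and let w : ℕ → H be pairwise orthogonal (⟨w_i, w_j⟩ = 0 for i ≠ j). Let c_1, …, c_p be reals and define y_k = w_k + Σ_{j=1}^{p} c_j w_{k−j} for k ∈ ℕ, where terms with negative index are taken to be 0. Let e : ℕ → H and real coefficients γ_{k,i} (k ∈ ℕ, 1 ≤ i ≤ p) satisfy, for every k: e_k = y_k − Σ_{i=1}^{p} γ_{k,i} e_{k−i} (terms with negative index taken to be 0) and ⟨e_k, e_{k−i}⟩ = 0 for each i = 1, …, p with k − i ≥ 0. Then ⟨e_k, e_j⟩ = 0 for all j < k. -/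
import Mathlib


open scoped RealInnerProductSpace

/-- Orthogonality propagation for the value-iteration identification of an MA(p) model:
if each error `e_k` is orthogonal to the previous `p` errors, then all errors are
pairwise orthogonal. -/
theorem stmt11 {H : Type*} [NormedAddCommGroup H] [InnerProductSpace ℝ H]
    (p : ℕ) (hp : 1 ≤ p) (w : ℕ → H)
    (hw : ∀ i j, i ≠ j → ⟪w i, w j⟫ = 0)
    (c : Fin p → ℝ) (y : ℕ → H)
    (hy : ∀ k, y k = w k +
      ∑ j : Fin p, if (j : ℕ) + 1 ≤ k then c j • w (k - ((j : ℕ) + 1)) else 0)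
    (e : ℕ → H) (γ : ℕ → Fin p → ℝ)
    (he : ∀ k, e k = y k -
      ∑ i : Fin p, if (i : ℕ) + 1 ≤ k then γ k i • e (k - ((i : ℕ) + 1)) else 0)
    (horth : ∀ k, ∀ i : Fin p, (i : ℕ) + 1 ≤ k → ⟪e k, e (k - ((i : ℕ) + 1))⟫ = 0) :
    ∀ k j, j < k → ⟪e k, e j⟫ = 0 := by
  -- First: w m ⟂ e j whenever j < m
  have hwA : ∀ j, ∀ m, j < m → ⟪w m, e j⟫ = 0 := by
    intro j
    induction j using Nat.strong_induction_on with
    | _ j ih =>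
      intro m hm
      rw [he j, hy j, inner_sub_right, inner_add_right, inner_sum, inner_sum]
      rw [hw m j (by omega)]
      have h1 : ∀ i : Fin p,
          ⟪w m, if (i : ℕ) + 1 ≤ j then c i • w (j - ((i : ℕ) + 1)) else 0⟫ = 0 := by
        intro i
        split
        · rw [real_inner_smul_right, hw m _ (by omega)]; ring
        · simp
      have h2 : ∀ i : Fin p,
          ⟪w m, if (i : ℕ) + 1 ≤ j then γ j i • e (j - ((i : ℕ) + 1)) else 0⟫ = 0 := by
        intro i
        split
        · rw [real_inner_smul_right, ih (j - ((i : ℕ) + 1)) (by omega) m (by omega)]; ring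
        · simp
      rw [Finset.sum_eq_zero (fun i _ => h1 i), Finset.sum_eq_zero (fun i _ => h2 i)]
      simp
  intro k
  induction k using Nat.strong_induction_on with
  | _ k ih =>
    intro j hjk
    by_cases hcase : k ≤ j + p
    · have hi : k - j - 1 < p := by omega
      have h := horth k ⟨k - j - 1, hi⟩ (by simp; omega)
      have : k - ((k - j - 1 : ℕ) + 1) = j := by omega
      simpa [this] using h
    · rw [he k, hy k, inner_sub_left, inner_add_left, sum_inner, sum_inner]
      rw [hwA j k (by omega)]
      have h1 : ∀ i : Fin p,
          ⟪(if (i : ℕ) + 1 ≤ k then c i • w (k - ((i : ℕ) + 1)) else 0), e j⟫ = 0 := by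
        intro i
        split
        · rw [real_inner_smul_left, hwA j (k - ((i : ℕ) + 1)) (by omega)]; ring
        · simp
      have h2 : ∀ i : Fin p,
          ⟪(if (i : ℕ) + 1 ≤ k then γ k i • e (k - ((i : ℕ) + 1)) else 0), e j⟫ = 0 := by
        intro i
        split
        · rw [real_inner_smul_left, ih (k - ((i : ℕ) + 1)) (by omega) j (by omega)]; ring
        · simp
      rw [Finset.sum_eq_zero (fun i _ => h1 i), Finset.sum_eq_zero (fun i _ => h2 i)]
      simp
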